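/- Let (κ,γ) lie in K₁ = {κ ≤ 0, γ > 1} ∪ {κ ≥ 1, γ > 0} ∪ {0 < κ < 1, γ > γ_c(κ)}, where γ_c is the inverse of κ_c(γ) = (1/2)(γ+2)√(1-γ) on (0,1) (extended so that the condition means κ > κ_c(γ) when 0 < γ < 1). Define D = κ² + 2γ(γ-1), α₊ = ((2-γ)κ + γ√D)/(2κ² + γ³), β₋ = (κ² + γ² - κ√D)/(2κ² + γ³). Then α₊² + β₋² < 1. -/

import Mathlib

lemma stmt14_aux1 (A x : ℝ) (hA : 0 < A) (hx : 0 ≤ x) (h : 0 < A ^ 2 - x ^ 2) :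
    0 < A - x := by nlinarith

lemma stmt14_aux2 (A x : ℝ) (hx : 0 ≤ x) (h : 0 < x ^ 2 - A ^ 2) :
    0 < A + x := by nlinarith

set_option maxHeartbeats 2000000 in
theorem stmt_14 (κ γ : ℝ) (hγ : 0 < γ)
    (h : (κ ≤ 0 ∧ 1 < γ) ∨ (1 ≤ κ) ∨
      (0 < κ ∧ κ < 1 ∧ (1 ≤ γ ∨ (γ < 1 ∧ (1 / 2) * (γ + 2) * Real.sqrt (1 - γ) < κ)))) :
    (((2 - γ) * κ + γ * Real.sqrt (κ ^ 2 + 2 * γ * (γ - 1))) /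
        (2 * κ ^ 2 + γ ^ 3)) ^ 2 +
    ((κ ^ 2 + γ ^ 2 - κ * Real.sqrt (κ ^ 2 + 2 * γ * (γ - 1))) /
        (2 * κ ^ 2 + γ ^ 3)) ^ 2 < 1 := by
  have hQ : (0 : ℝ) < 2 * κ ^ 2 + γ ^ 3 := by positivity
  set s : ℝ := Real.sqrt (κ ^ 2 + 2 * γ * (γ - 1)) with hs_def
  have hs0 : 0 ≤ s := Real.sqrt_nonneg _
  -- First, reduce the case hypothesis to three master cases, each providing D ≥ 0.
  -- Case structure:
  --  (I)  1 ≤ γ ∧ 0 < κ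
  --  (II) κ ≤ 0 ∧ 1 < γ
  --  (III) γ < 1 ∧ 0 < κ ∧ (γ+2)^2*(1-γ) < 4*κ^2
  have hmaster : (1 ≤ γ ∧ 0 < κ) ∨ (κ ≤ 0 ∧ 1 < γ) ∨
      (γ < 1 ∧ 0 < κ ∧ (γ + 2) ^ 2 * (1 - γ) < 4 * κ ^ 2) := by
    rcases h with ⟨hk, hg⟩ | hk | ⟨hk, _, hg⟩
    · exact Or.inr (Or.inl ⟨hk, hg⟩)
    · rcases le_or_gt 1 γ with hg | hg
      · exact Or.inl ⟨hg, by linarith⟩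
      · refine Or.inr (Or.inr ⟨hg, by linarith, ?_⟩)
        nlinarith [sq_nonneg γ, sq_nonneg (κ - 1), hγ]
    · rcases hg with hg | ⟨hg, hc⟩
      · exact Or.inl ⟨hg, hk⟩
      · refine Or.inr (Or.inr ⟨hg, hk, ?_⟩)
        have h1g : (0 : ℝ) ≤ 1 - γ := by linarith
        have ht : Real.sqrt (1 - γ) ^ 2 = 1 - γ := Real.sq_sqrt h1g
        have ht0 : 0 ≤ Real.sqrt (1 - γ) := Real.sqrt_nonneg _
        have hc0 : 0 ≤ (1 / 2) * (γ + 2) * Real.sqrt (1 - γ) := by positivity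
        nlinarith [hc, hc0, ht]
  -- D ≥ 0 in all cases
  have hD0 : 0 ≤ κ ^ 2 + 2 * γ * (γ - 1) := by
    rcases hmaster with ⟨hg, _⟩ | ⟨_, hg⟩ | ⟨hg, hk, hk4⟩
    · nlinarith [sq_nonneg κ]
    · nlinarith [sq_nonneg κ]
    · nlinarith [sq_nonneg (γ - 2), mul_nonneg (by linarith : (0:ℝ) ≤ 1 - γ) (sq_nonneg (γ - 2))]
  have hs2 : s ^ 2 = κ ^ 2 + 2 * γ * (γ - 1) := Real.sq_sqrt hD0
  rw [div_pow, div_pow, ← add_div, div_lt_one (by positivity)]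
  -- key reduction: suffices 0 < A + 2κsD
  have key : (2 * κ ^ 2 + γ ^ 3) ^ 2 -
      (((2 - γ) * κ + γ * s) ^ 2 + (κ ^ 2 + γ ^ 2 - κ * s) ^ 2) =
      (2 * κ ^ 4 + 2 * κ ^ 2 * (γ - 1) * (2 * γ ^ 2 - γ + 2)
        + γ ^ 3 * (γ - 1) ^ 2 * (γ + 2))
      + 2 * κ * s * (κ ^ 2 + 2 * γ * (γ - 1)) := by
    linear_combination (-(γ ^ 2 + κ ^ 2)) * hs2
  have main : 0 < (2 * κ ^ 4 + 2 * κ ^ 2 * (γ - 1) * (2 * γ ^ 2 - γ + 2)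
        + γ ^ 3 * (γ - 1) ^ 2 * (γ + 2))
      + 2 * κ * s * (κ ^ 2 + 2 * γ * (γ - 1)) := by
    set A : ℝ := 2 * κ ^ 4 + 2 * κ ^ 2 * (γ - 1) * (2 * γ ^ 2 - γ + 2)
        + γ ^ 3 * (γ - 1) ^ 2 * (γ + 2) with hA_def
    set D : ℝ := κ ^ 2 + 2 * γ * (γ - 1) with hD_def
    have hxsq : (2 * κ * s * D) ^ 2 = 4 * κ ^ 2 * D ^ 3 := by
      have : s ^ 2 = D := hs2
      linear_combination (4 * κ ^ 2 * D ^ 2) * this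
    have hfact : A ^ 2 - 4 * κ ^ 2 * D ^ 3 =
        (γ - 1) ^ 3 * (4 * κ ^ 2 + (γ + 2) ^ 2 * (γ - 1)) * (2 * κ ^ 2 + γ ^ 3) ^ 2 := by
      rw [hA_def, hD_def]; ring
    rcases hmaster with ⟨hg, hk⟩ | ⟨hk, hg⟩ | ⟨hg, hk, hk4⟩
    · -- 1 ≤ γ, 0 < κ : A > 0 and 2κsD ≥ 0
      have hA : 0 < A := by
        rw [hA_def]
        nlinarith [pow_pos hk 4, sq_nonneg κ,
          mul_nonneg (sq_nonneg κ) (mul_nonneg (by linarith : (0:ℝ) ≤ γ - 1)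
            (by nlinarith [sq_nonneg γ, sq_nonneg (γ - 1)] : (0:ℝ) ≤ 2 * γ ^ 2 - γ + 2)),
          mul_nonneg (mul_nonneg (by positivity : (0:ℝ) ≤ γ ^ 3) (sq_nonneg (γ - 1)))
            (by linarith : (0:ℝ) ≤ γ + 2)]
      have hx : 0 ≤ 2 * κ * s * D := by
        apply mul_nonneg
        · apply mul_nonneg (by linarith) hs0
        · exact hD0
      linarith
    · -- κ ≤ 0, 1 < γ : A > 0 and A² > (2κsD)²
      have hA : 0 < A := by
        rw [hA_def]
        nlinarith [sq_nonneg (κ ^ 2), sq_nonneg κ,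
          mul_nonneg (sq_nonneg κ) (mul_nonneg (by linarith : (0:ℝ) ≤ γ - 1)
            (by nlinarith [sq_nonneg γ, sq_nonneg (γ - 1)] : (0:ℝ) ≤ 2 * γ ^ 2 - γ + 2)),
          mul_pos (mul_pos (by positivity : (0:ℝ) < γ ^ 3)
            (by nlinarith : (0:ℝ) < (γ - 1) ^ 2)) (by linarith : (0:ℝ) < γ + 2)]
      have hR : 0 < A ^ 2 - 4 * κ ^ 2 * D ^ 3 := by
        rw [hfact]
        apply mul_pos (mul_pos (pow_pos (by linarith : (0:ℝ) < γ - 1) 3) ?_) (by positivity)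
        nlinarith [sq_nonneg κ, sq_nonneg (γ + 2)]
      have hx : 0 ≤ -(2 * κ * s * D) := by
        have : 0 ≤ (-κ) * s * D := mul_nonneg (mul_nonneg (by linarith) hs0) hD0
        nlinarith
      have := stmt14_aux1 A (-(2 * κ * s * D)) hA hx (by nlinarith [hR, hxsq])
      linarith
    · -- γ < 1, 0 < κ, (γ+2)²(1-γ) < 4κ² : (2κsD)² > A², 2κsD ≥ 0
      have hR : 0 < 4 * κ ^ 2 * D ^ 3 - A ^ 2 := by
        have : -(A ^ 2 - 4 * κ ^ 2 * D ^ 3) =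
            (1 - γ) ^ 3 * (4 * κ ^ 2 - (γ + 2) ^ 2 * (1 - γ)) * (2 * κ ^ 2 + γ ^ 3) ^ 2 := by
          rw [hfact]; ring
        nlinarith [mul_pos (mul_pos (pow_pos (by linarith : (0:ℝ) < 1 - γ) 3)
          (by linarith : (0:ℝ) < 4 * κ ^ 2 - (γ + 2) ^ 2 * (1 - γ))) (by positivity : (0:ℝ) < (2 * κ ^ 2 + γ ^ 3) ^ 2)]
      have hx : 0 ≤ 2 * κ * s * D :=
        mul_nonneg (mul_nonneg (by linarith) hs0) hD0
      have := stmt14_aux2 A (2 * κ * s * D) hx (by nlinarith [hR, hxsq])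
      linarith
  linarith [key, main]
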